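/- Let F be a unit vector in Im 𝕆 and α, β ∈ T_F^{1,0} = {v ∈ F^⊥ ⊗ ℂ : F × v = iv}. Then |α × β|² = 2(|α|²|β|² − |(α, β̄)|²), where |v|² = (v, v̄). -/
import Mathlib


open scoped ComplexConjugate

/-- The standard complex-bilinear symmetric form on `ℂⁿ`. -/
noncomputable def Bform {n : ℕ} (u v : Fin n → ℂ) : ℂ := ∑ i, u i * v i

/-- Componentwise complex conjugation on `ℂⁿ`. -/
noncomputable def conjn {n : ℕ} (v : Fin n → ℂ) : Fin n → ℂ := fun i => conj (v i)

lemma Bform_comm {n : ℕ} (u v : Fin n → ℂ) : Bform u v = Bform v u := by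
  simp only [Bform]
  exact Finset.sum_congr rfl fun i _ => mul_comm _ _

lemma Bform_add_right {n : ℕ} (u v w : Fin n → ℂ) :
    Bform u (v + w) = Bform u v + Bform u w := by
  simp only [Bform, Pi.add_apply, mul_add, Finset.sum_add_distrib]

lemma Bform_sub_right {n : ℕ} (u v w : Fin n → ℂ) :
    Bform u (v - w) = Bform u v - Bform u w := by
  simp only [Bform, Pi.sub_apply, mul_sub, Finset.sum_sub_distrib]

lemma Bform_neg_right {n : ℕ} (u v : Fin n → ℂ) :
    Bform u (-v) = -(Bform u v) := by
  simp only [Bform, Pi.neg_apply, mul_neg, Finset.sum_neg_distrib]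

lemma Bform_smul_right {n : ℕ} (s : ℂ) (u v : Fin n → ℂ) :
    Bform u (s • v) = s * Bform u v := by
  simp only [Bform, Pi.smul_apply, smul_eq_mul, Finset.mul_sum]
  exact Finset.sum_congr rfl fun i _ => by ring

lemma Bform_smul_left {n : ℕ} (s : ℂ) (u v : Fin n → ℂ) :
    Bform (s • u) v = s * Bform u v := by
  rw [Bform_comm (s • u) v, Bform_smul_right, Bform_comm v u]

lemma Bform_conjn {n : ℕ} (u v : Fin n → ℂ) :
    Bform (conjn u) (conjn v) = conj (Bform u v) := by
  simp [Bform, conjn, map_sum, map_mul]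

lemma conjn_smul {n : ℕ} (s : ℂ) (v : Fin n → ℂ) :
    conjn (s • v) = conj s • conjn v := by
  funext i
  simp [conjn, Pi.smul_apply, smul_eq_mul, map_mul]

/-- For F a real unit vector and α, β ∈ T_F^{1,0},
|α × β|² = 2(|α|²|β|² − |(α, β̄)|²), where |v|² = (v, v̄). -/
theorem norm_sq_cross_onezero
    (cross : (Fin 7 → ℂ) →ₗ[ℂ] (Fin 7 → ℂ) →ₗ[ℂ] (Fin 7 → ℂ))
    (h1 : ∀ u v w, Bform u (cross v w) = Bform (cross u v) w)
    (h2 : ∀ u v w : Fin 7 → ℂ, cross u (cross v w) + cross (cross u v) w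
        = (2 * Bform u w) • v - Bform u v • w - Bform v w • u)
    (hconj : ∀ u v, conjn (cross u v) = cross (conjn u) (conjn v))
    (F : Fin 7 → ℂ) (hFreal : conjn F = F) (hFunit : Bform F F = 1)
    (α β : Fin 7 → ℂ)
    (hαperp : Bform F α = 0) (hα : cross F α = Complex.I • α)
    (hβperp : Bform F β = 0) (hβ : cross F β = Complex.I • β) :
    Bform (cross α β) (conjn (cross α β))
      = 2 * (Bform α (conjn α) * Bform β (conjn β)
          - Bform α (conjn β) * Bform (conjn α) β) := by
  have h1' : ∀ u v w, Bform (cross u v) w = Bform u (cross v w) :=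
    fun u v w => (h1 u v w).symm
  -- conjugate eigenvector facts
  have hca : cross F (conjn α) = -Complex.I • conjn α := by
    have h := congrArg conjn hα
    rw [hconj, hFreal, conjn_smul, Complex.conj_I] at h
    exact h
  have hcb : cross F (conjn β) = -Complex.I • conjn β := by
    have h := congrArg conjn hβ
    rw [hconj, hFreal, conjn_smul, Complex.conj_I] at h
    exact h
  have hFa' : Bform F (conjn α) = 0 := by
    have h := Bform_conjn F α
    rw [hFreal, hαperp] at h
    simpa using h
  have hFb' : Bform F (conjn β) = 0 := by
    have h := Bform_conjn F β
    rw [hFreal, hβperp] at h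
    simpa using h
  have hαF : Bform α F = 0 := by rw [Bform_comm α F]; exact hαperp
  -- scalar products with F
  have bFc : Bform F (cross α β) = Complex.I * Bform α β := by
    rw [h1 F α β, hα, Bform_smul_left]
  have bFc' : Bform F (cross (conjn α) (conjn β))
      = -Complex.I * Bform (conjn α) (conjn β) := by
    rw [h1 F (conjn α) (conjn β), hca, Bform_smul_left]
  have bFd : Bform F (cross β (conjn α)) = Complex.I * Bform β (conjn α) := by
    rw [h1 F β (conjn α), hβ, Bform_smul_left]
  -- vector identities
  have hFc : cross F (cross α β)
      = -(Bform α β • F) - Complex.I • cross α β := by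
    have h := h2 F α β
    rw [hα, map_smul, LinearMap.smul_apply, hαperp, hβperp] at h
    simp only [mul_zero, zero_smul, sub_zero, zero_sub] at h
    exact eq_sub_of_add_eq h
  have hFd : cross F (cross β (conjn α))
      = -(Bform β (conjn α) • F) - Complex.I • cross β (conjn α) := by
    have h := h2 F β (conjn α)
    rw [hβ, map_smul, LinearMap.smul_apply, hβperp, hFa'] at h
    simp only [mul_zero, zero_smul, sub_zero, zero_sub] at h
    exact eq_sub_of_add_eq h
  -- pairing of h2 with an arbitrary vector
  have pair : ∀ x u v w : Fin 7 → ℂ,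
      Bform x (cross u (cross v w)) + Bform x (cross (cross u v) w)
        = 2 * Bform u w * Bform x v - Bform u v * Bform x w
          - Bform v w * Bform x u := by
    intro x u v w
    have h := congrArg (Bform x) (h2 u v w)
    rw [Bform_add_right, Bform_sub_right, Bform_sub_right, Bform_smul_right,
        Bform_smul_right, Bform_smul_right] at h
    linear_combination h
  -- Equation E1
  have E1 : Bform (cross α β) (cross (conjn α) (conjn β))
      + Bform (cross β (conjn α)) (cross (conjn β) α)
      = 2 * Bform β (conjn β) * Bform α (conjn α)
        - Bform (conjn α) β * Bform α (conjn β)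
        - Bform (conjn α) (conjn β) * Bform α β := by
    have h := pair α β (conjn α) (conjn β)
    rw [h1 α β (cross (conjn α) (conjn β))] at h
    rw [Bform_comm α (cross (cross β (conjn α)) (conjn β)),
        ← h1 (cross β (conjn α)) (conjn β) α] at h
    rw [Bform_comm β (conjn α)] at h
    linear_combination h
  -- Equation A1
  have A1 : Complex.I * Bform (cross α β) (cross (conjn α) (conjn β))
      + Bform (cross α F) (cross β (cross (conjn α) (conjn β)))
      = -2 * Complex.I * (Bform α β * Bform (conjn α) (conjn β)) := by
    have h := pair (cross (conjn α) (conjn β)) α F β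
    rw [hβ, map_smul, Bform_smul_right] at h
    rw [Bform_comm (cross (conjn α) (conjn β)) (cross α β)] at h
    rw [Bform_comm (cross (conjn α) (conjn β)) (cross (cross α F) β),
        ← h1 (cross α F) β (cross (conjn α) (conjn β))] at h
    rw [hαF, hβperp, Bform_comm (cross (conjn α) (conjn β)) F, bFc'] at h
    linear_combination h
  -- Equation A2
  have A2 : Bform (cross α F) (cross β (cross (conjn α) (conjn β)))
      + Bform (cross α F) (cross (cross β (conjn α)) (conjn β))
      = -2 * Complex.I * (Bform β (conjn β) * Bform α (conjn α))
        + Complex.I * (Bform (conjn α) β * Bform α (conjn β))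
        - Complex.I * (Bform (conjn α) (conjn β) * Bform α β) := by
    have h := pair (cross α F) β (conjn α) (conjn β)
    rw [h1' α F (conjn α), hca, Bform_smul_right] at h
    rw [h1' α F (conjn β), hcb, Bform_smul_right] at h
    rw [h1' α F β, hβ, Bform_smul_right] at h
    rw [Bform_comm β (conjn α)] at h
    linear_combination h
  -- Equation A3
  have A3 : Bform (cross α F) (cross (cross β (conjn α)) (conjn β))
      = Complex.I * Bform (cross β (conjn α)) (cross (conjn β) α)
        - 2 * Complex.I * (Bform (conjn α) β * Bform α (conjn β)) := by
    have h := pair α F (cross β (conjn α)) (conjn β)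
    rw [h1 α F (cross (cross β (conjn α)) (conjn β))] at h
    rw [hFd] at h
    simp only [map_sub, map_neg, map_smul, LinearMap.sub_apply, LinearMap.neg_apply,
        LinearMap.smul_apply, Bform_sub_right, Bform_neg_right, Bform_smul_right] at h
    rw [hcb, Bform_smul_right] at h
    rw [Bform_comm α (cross (cross β (conjn α)) (conjn β)),
        ← h1 (cross β (conjn α)) (conjn β) α] at h
    rw [hFb', bFd, hαF] at h
    rw [Bform_comm β (conjn α)] at h
    linear_combination h
  -- Equation B1
  have B1 : Complex.I * Bform (cross β (conjn α)) (cross (conjn β) α)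
      + Bform (cross (conjn β) F) (cross α (cross β (conjn α)))
      = 2 * Complex.I * (Bform α (conjn β) * Bform (conjn α) β) := by
    have h := pair (cross β (conjn α)) (conjn β) F α
    rw [hα, map_smul, Bform_smul_right] at h
    rw [Bform_comm (cross β (conjn α)) (cross (cross (conjn β) F) α),
        ← h1 (cross (conjn β) F) α (cross β (conjn α))] at h
    rw [Bform_comm (cross β (conjn α)) F, bFd] at h
    rw [Bform_comm (conjn β) F, hFb'] at h
    rw [hαperp] at h
    rw [Bform_comm (conjn β) α] at h
    rw [Bform_comm β (conjn α)] at h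
    linear_combination h
  -- Equation B2
  have B2 : Bform (cross (conjn β) F) (cross α (cross β (conjn α)))
      + Bform (cross (conjn β) F) (cross (cross α β) (conjn α))
      = 2 * Complex.I * (Bform α (conjn α) * Bform β (conjn β))
        + Complex.I * (Bform α β * Bform (conjn α) (conjn β))
        - Complex.I * (Bform (conjn α) β * Bform α (conjn β)) := by
    have h := pair (cross (conjn β) F) α β (conjn α)
    rw [h1' (conjn β) F β, hβ, Bform_smul_right] at h
    rw [h1' (conjn β) F (conjn α), hca, Bform_smul_right] at h
    rw [h1' (conjn β) F α, hα, Bform_smul_right] at h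
    rw [Bform_comm (conjn β) β, Bform_comm (conjn β) (conjn α),
        Bform_comm (conjn β) α, Bform_comm β (conjn α)] at h
    linear_combination h
  -- Equation B3
  have B3 : Bform (cross (conjn β) F) (cross (cross α β) (conjn α))
      = Complex.I * Bform (cross α β) (cross (conjn α) (conjn β))
        - 2 * Complex.I * (Bform α β * Bform (conjn α) (conjn β)) := by
    have h := pair (conjn β) F (cross α β) (conjn α)
    rw [h1 (conjn β) F (cross (cross α β) (conjn α))] at h
    rw [hFc] at h
    simp only [map_sub, map_neg, map_smul, LinearMap.sub_apply, LinearMap.neg_apply,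
        LinearMap.smul_apply, Bform_sub_right, Bform_neg_right, Bform_smul_right] at h
    rw [hca, Bform_smul_right] at h
    rw [Bform_comm (conjn β) (cross (cross α β) (conjn α)),
        ← h1 (cross α β) (conjn α) (conjn β)] at h
    rw [hFa', bFc] at h
    rw [Bform_comm (conjn β) (conjn α)] at h
    rw [Bform_comm (conjn β) F, hFb'] at h
    linear_combination h
  have hI : Complex.I * Complex.I = -1 := Complex.I_mul_I
  have eqA : Bform (cross α β) (cross (conjn α) (conjn β))
      - Bform (cross β (conjn α)) (cross (conjn β) α)
      = 2 * Bform β (conjn β) * Bform α (conjn α)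
        - 3 * (Bform (conjn α) β * Bform α (conjn β))
        - Bform α β * Bform (conjn α) (conjn β) := by
    linear_combination Complex.I * A2 - Complex.I * A1 - Complex.I * A3
      + (Bform (cross α β) (cross (conjn α) (conjn β))
          - Bform (cross β (conjn α)) (cross (conjn β) α)
          - 2 * Bform β (conjn β) * Bform α (conjn α)
          + 3 * (Bform (conjn α) β * Bform α (conjn β))
          + Bform α β * Bform (conjn α) (conjn β)) * hI
  have eqB : Bform (cross α β) (cross (conjn α) (conjn β))
      - Bform (cross β (conjn α)) (cross (conjn β) α)
      = 2 * Bform β (conjn β) * Bform α (conjn α)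
        - 3 * (Bform (conjn α) β * Bform α (conjn β))
        + 3 * (Bform α β * Bform (conjn α) (conjn β)) := by
    linear_combination -Complex.I * B2 + Complex.I * B1 + Complex.I * B3
      + (Bform (cross α β) (cross (conjn α) (conjn β))
          - Bform (cross β (conjn α)) (cross (conjn β) α)
          - 2 * Bform β (conjn β) * Bform α (conjn α)
          + 3 * (Bform (conjn α) β * Bform α (conjn β))
          - 3 * (Bform α β * Bform (conjn α) (conjn β))) * hI
  rw [hconj α β]
  linear_combination (1/2 : ℂ) * E1 + (1/4 : ℂ) * eqA + (1/4 : ℂ) * eqB
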